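/- arXiv:1601.04532 — 6 statements merged into one kernel-verified Lean document; each statement's English description precedes it below -/
import Mathlib

section
/- Let X and Y be measurable spaces, J ⊆ X × Y an arbitrary subset, and let μ and ν be probability measures on X and Y respectively, evaluated on arbitrary subsets via their outer-measure extension. If μ(A) ≤ ν(J⁺(A)) for every subset A ⊆ X, then ν(B) ≤ μ(J⁻(B)) for every measurable set B ⊆ Y. (In particular, in the inequalities characterizing J-relatedness, the family of inequalities in one direction implies the family in the other direction.) -/
open MeasureTheory Set

/-- For probability measures `μ`, `ν` on measurable spaces `X`, `Y` and an arbitrary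
`J ⊆ X × Y`: if `μ(A) ≤ ν(J⁺(A))` for every subset `A ⊆ X`, then `ν(B) ≤ μ(J⁻(B))`
for every measurable `B ⊆ Y`. Measures are evaluated on arbitrary sets via their
outer-measure extension. -/
theorem forward_inequalities_imply_backward
    {X Y : Type*} [MeasurableSpace X] [MeasurableSpace Y]
    (J : Set (X × Y)) (μ : Measure X) (ν : Measure Y)
    [IsProbabilityMeasure μ] [IsProbabilityMeasure ν]
    (h : ∀ A : Set X, μ A ≤ ν {y | ∃ x ∈ A, (x, y) ∈ J}) :
    ∀ B : Set Y, MeasurableSet B → ν B ≤ μ {x | ∃ y ∈ B, (x, y) ∈ J} := by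
  intro B hB
  set S := {x | ∃ y ∈ B, (x, y) ∈ J} with hS
  have hsub : {y | ∃ x ∈ Sᶜ, (x, y) ∈ J} ⊆ Bᶜ := by
    rintro y ⟨x, hx, hxy⟩ hyB
    exact hx ⟨y, hyB, hxy⟩
  have h1 : μ Sᶜ ≤ ν Bᶜ := (h Sᶜ).trans (measure_mono hsub)
  have h2 : ν Bᶜ = 1 - ν B := by
    rw [measure_compl hB (measure_ne_top ν B), measure_univ]
  have h3 : (1 : ENNReal) - μ S ≤ μ Sᶜ := by
    have hu := measure_union_le (μ := μ) S Sᶜ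
    rw [Set.union_compl_self, measure_univ] at hu
    exact tsub_le_iff_left.mpr hu
  have h4 : (1 : ENNReal) - μ S ≤ 1 - ν B := h3.trans (h1.trans_eq h2)
  have h5 : (1 : ENNReal) - (1 - ν B) ≤ 1 - (1 - μ S) := tsub_le_tsub_left h4 1
  rwa [ENNReal.sub_sub_cancel ENNReal.one_ne_top prob_le_one,
    ENNReal.sub_sub_cancel ENNReal.one_ne_top prob_le_one] at h5
end

section
/- Let X and Y be measurable spaces, J ⊆ X × Y a subset, and let μ and ν be probability measures on X and Y satisfying ν(J⁺(A')) ≥ μ(A') for every subset A' ⊆ X and μ(J⁻(B')) ≥ ν(B') for every subset B' ⊆ Y (measures evaluated via outer measure). Suppose A ⊆ X is measurable, J⁺(A) ⊆ Y is measurable, and 0 < μ(A) = ν(J⁺(A)) < 1. Then the pair (μ_A, ν_A) := ((1/μ(A))·μ|_A, (1/μ(A))·ν|_{J⁺(A)}) and the pair (μ_{Aᶜ}, ν_{Aᶜ}) := ((1/μ(Aᶜ))·μ|_{Aᶜ}, (1/μ(Aᶜ))·ν|_{J⁺(A)ᶜ}) are pairs of probability measures, and each pair again satisfies the same condition: ν_A(J⁺(A'))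 ≥ μ_A(A') and μ_A(J⁻(B')) ≥ ν_A(B') for all subsets A' ⊆ X and B' ⊆ Y, and likewise for (μ_{Aᶜ}, ν_{Aᶜ}). -/
open MeasureTheory Set

/-- **Lemma (Suhr, Lemma 3.1, first case).** If probability measures `μ`, `ν` satisfy
`ν(J⁺(A')) ≥ μ(A')` and `μ(J⁻(B')) ≥ ν(B')` for all subsets, and `A` is measurable with
`J⁺(A)` measurable and `0 < μ(A) = ν(J⁺(A)) < 1`, then the renormalized restricted pairs
`(μ_A, ν_A)` and `(μ_{Aᶜ}, ν_{Aᶜ})` are probability measures satisfying the same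
inequalities. -/
theorem restricted_pairs_satisfy_condition_of_saturated_set
    {X Y : Type*} [MeasurableSpace X] [MeasurableSpace Y]
    (J : Set (X × Y)) (μ : Measure X) (ν : Measure Y)
    [IsProbabilityMeasure μ] [IsProbabilityMeasure ν]
    (hν : ∀ A' : Set X, μ A' ≤ ν {y | ∃ x ∈ A', (x, y) ∈ J})
    (hμ : ∀ B' : Set Y, ν B' ≤ μ {x | ∃ y ∈ B', (x, y) ∈ J})
    (A : Set X) (hA : MeasurableSet A)
    (hJA : MeasurableSet {y | ∃ x ∈ A, (x, y) ∈ J})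
    (h0 : 0 < μ A) (heq : μ A = ν {y | ∃ x ∈ A, (x, y) ∈ J}) (h1 : μ A < 1) :
    (IsProbabilityMeasure ((μ A)⁻¹ • μ.restrict A) ∧
     IsProbabilityMeasure ((μ A)⁻¹ • ν.restrict {y | ∃ x ∈ A, (x, y) ∈ J}) ∧
     (∀ A' : Set X,
        ((μ A)⁻¹ • μ.restrict A) A' ≤
          ((μ A)⁻¹ • ν.restrict {y | ∃ x ∈ A, (x, y) ∈ J}) {y | ∃ x ∈ A', (x, y) ∈ J}) ∧
     (∀ B' : Set Y,
        ((μ A)⁻¹ • ν.restrict {y | ∃ x ∈ A, (x, y) ∈ J}) B' ≤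
          ((μ A)⁻¹ • μ.restrict A) {x | ∃ y ∈ B', (x, y) ∈ J})) ∧
    (IsProbabilityMeasure ((μ Aᶜ)⁻¹ • μ.restrict Aᶜ) ∧
     IsProbabilityMeasure ((μ Aᶜ)⁻¹ • ν.restrict {y | ∃ x ∈ A, (x, y) ∈ J}ᶜ) ∧
     (∀ A' : Set X,
        ((μ Aᶜ)⁻¹ • μ.restrict Aᶜ) A' ≤
          ((μ Aᶜ)⁻¹ • ν.restrict {y | ∃ x ∈ A, (x, y) ∈ J}ᶜ) {y | ∃ x ∈ A', (x, y) ∈ J}) ∧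
     (∀ B' : Set Y,
        ((μ Aᶜ)⁻¹ • ν.restrict {y | ∃ x ∈ A, (x, y) ∈ J}ᶜ) B' ≤
          ((μ Aᶜ)⁻¹ • μ.restrict Aᶜ) {x | ∃ y ∈ B', (x, y) ∈ J})) := by
  set T : Set Y := {y | ∃ x ∈ A, (x, y) ∈ J} with hTdef
  have hμA_ne : μ A ≠ 0 := h0.ne'
  have hμA_top : μ A ≠ ⊤ := measure_ne_top μ A
  have hAc : μ Aᶜ = 1 - μ A := by
    rw [measure_compl hA hμA_top, measure_univ]
  have hTc : ν Tᶜ = 1 - μ A := by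
    rw [measure_compl hJA (measure_ne_top ν T), measure_univ, heq]
  have hAc_ne : μ Aᶜ ≠ 0 := by
    rw [hAc]
    exact (tsub_pos_of_lt h1).ne'
  have hAc_top : μ Aᶜ ≠ ⊤ := measure_ne_top μ Aᶜ
  -- key inclusion: J⁻ of a subset of T lands in A ∪ (J⁻ of that subset ∩ A)ᶜ ... we use:
  -- if (x,y) ∈ J with x ∈ A then y ∈ T
  have hmemT : ∀ x y, x ∈ A → (x, y) ∈ J → y ∈ T := fun x y hx hxy => ⟨x, hx, hxy⟩
  refine ⟨⟨?_, ?_, ?_, ?_⟩, ?_, ?_, ?_, ?_⟩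
  · exact ⟨by
      rw [Measure.smul_apply, Measure.restrict_apply_univ, smul_eq_mul,
        ENNReal.inv_mul_cancel hμA_ne hμA_top]⟩
  · exact ⟨by
      rw [Measure.smul_apply, Measure.restrict_apply_univ, smul_eq_mul, ← heq,
        ENNReal.inv_mul_cancel hμA_ne hμA_top]⟩
  · -- μ(A' ∩ A) ≤ ν(J⁺(A') ∩ T)
    intro A'
    rw [Measure.smul_apply, Measure.smul_apply, smul_eq_mul, smul_eq_mul,
      μ.restrict_apply' hA, ν.restrict_apply' hJA]
    refine mul_le_mul_right ((hν (A' ∩ A)).trans (measure_mono ?_)) _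
    rintro y ⟨x, ⟨hx', hxA⟩, hxy⟩
    exact ⟨⟨x, hx', hxy⟩, hmemT x y hxA hxy⟩
  · -- ν(B' ∩ T) ≤ μ(J⁻(B') ∩ A)
    intro B'
    rw [Measure.smul_apply, Measure.smul_apply, smul_eq_mul, smul_eq_mul,
      μ.restrict_apply' hA, ν.restrict_apply' hJA]
    refine mul_le_mul_right ?_ _
    set W : Set Y := (B' ∩ T) ∪ Tᶜ with hW
    have hsplit : ν (B' ∩ T) + ν Tᶜ = ν W := by
      have := measure_inter_add_diff (μ := ν) W hJA
      have h1' : W ∩ T = B' ∩ T := by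
        rw [hW, union_inter_distrib_right, compl_inter_self, union_empty,
          inter_assoc, inter_self]
      have h2' : W \ T = Tᶜ := by
        rw [hW, union_diff_distrib, diff_eq, inter_assoc, inter_compl_self,
          inter_empty, empty_union, diff_eq, inter_self]
      rw [h1', h2'] at this
      exact this
    have hWsub : {x | ∃ y ∈ W, (x, y) ∈ J} ⊆ ({x | ∃ y ∈ B', (x, y) ∈ J} ∩ A) ∪ Aᶜ := by
      rintro x ⟨y, hyW, hxy⟩
      by_cases hxA : x ∈ A
      · rcases hyW with hy | hy
        · exact Or.inl ⟨⟨y, hy.1, hxy⟩, hxA⟩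
        · exact absurd (hmemT x y hxA hxy) hy
      · exact Or.inr hxA
    have hmain : ν (B' ∩ T) + ν Tᶜ ≤ μ ({x | ∃ y ∈ B', (x, y) ∈ J} ∩ A) + μ Aᶜ := by
      rw [hsplit]
      calc ν W ≤ μ {x | ∃ y ∈ W, (x, y) ∈ J} := hμ W
        _ ≤ μ (({x | ∃ y ∈ B', (x, y) ∈ J} ∩ A) ∪ Aᶜ) := measure_mono hWsub
        _ ≤ _ := measure_union_le _ _
    rw [hTc, ← hAc] at hmain
    exact (ENNReal.add_le_add_iff_right hAc_top).mp hmain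
  · exact ⟨by
      rw [Measure.smul_apply, Measure.restrict_apply_univ, smul_eq_mul,
        ENNReal.inv_mul_cancel hAc_ne hAc_top]⟩
  · exact ⟨by
      rw [Measure.smul_apply, Measure.restrict_apply_univ, smul_eq_mul, hTc, ← hAc,
        ENNReal.inv_mul_cancel hAc_ne hAc_top]⟩
  · -- μ(A' ∩ Aᶜ) ≤ ν(J⁺(A') ∩ Tᶜ)
    intro A'
    rw [Measure.smul_apply, Measure.smul_apply, smul_eq_mul, smul_eq_mul,
      μ.restrict_apply' hA.compl, ν.restrict_apply' hJA.compl]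
    refine mul_le_mul_right ?_ _
    set W : Set X := (A' ∩ Aᶜ) ∪ A with hW
    have hsplit : μ (A' ∩ Aᶜ) + μ A = μ W := by
      have := measure_inter_add_diff (μ := μ) W hA.compl
      have h1' : W ∩ Aᶜ = A' ∩ Aᶜ := by
        rw [hW, union_inter_distrib_right, inter_compl_self, union_empty,
          inter_assoc, inter_self]
      have h2' : W \ Aᶜ = A := by
        rw [hW, union_diff_distrib, diff_eq, compl_compl, inter_assoc,
          compl_inter_self, inter_empty, empty_union, diff_eq, compl_compl, inter_self]
      rw [h1', h2'] at this
      exact this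
    have hWsub : {y | ∃ x ∈ W, (x, y) ∈ J} ⊆ ({y | ∃ x ∈ A', (x, y) ∈ J} ∩ Tᶜ) ∪ T := by
      rintro y ⟨x, hxW, hxy⟩
      by_cases hyT : y ∈ T
      · exact Or.inr hyT
      · rcases hxW with hx | hx
        · exact Or.inl ⟨⟨x, hx.1, hxy⟩, hyT⟩
        · exact absurd (hmemT x y hx hxy) hyT
    have hmain : μ (A' ∩ Aᶜ) + μ A ≤ ν ({y | ∃ x ∈ A', (x, y) ∈ J} ∩ Tᶜ) + ν T := by
      rw [hsplit]
      calc μ W ≤ ν {y | ∃ x ∈ W, (x, y) ∈ J} := hν W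
        _ ≤ ν (({y | ∃ x ∈ A', (x, y) ∈ J} ∩ Tᶜ) ∪ T) := measure_mono hWsub
        _ ≤ _ := measure_union_le _ _
    rw [heq] at hmain
    exact (ENNReal.add_le_add_iff_right (measure_ne_top ν T)).mp hmain
  · -- ν(B' ∩ Tᶜ) ≤ μ(J⁻(B') ∩ Aᶜ)
    intro B'
    rw [Measure.smul_apply, Measure.smul_apply, smul_eq_mul, smul_eq_mul,
      μ.restrict_apply' hA.compl, ν.restrict_apply' hJA.compl]
    refine mul_le_mul_right ((hμ (B' ∩ Tᶜ)).trans (measure_mono ?_)) _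
    rintro x ⟨y, ⟨hyB, hyTc⟩, hxy⟩
    refine ⟨⟨y, hyB, hxy⟩, fun hxA => hyTc (hmemT x y hxA hxy)⟩
end

section
/- Let X and Y be measurable spaces, J ⊆ X × Y a subset, and let μ and ν be probability measures on X and Y satisfying ν(J⁺(A')) ≥ μ(A') for every subset A' ⊆ X and μ(J⁻(B')) ≥ ν(B') for every subset B' ⊆ Y (measures evaluated via outer measure). Suppose B ⊆ Y is measurable, J⁻(B) ⊆ X is measurable, and 0 < ν(B) = μ(J⁻(B)) < 1. Then the pair (μ_B, ν_B) := ((1/ν(B))·μ|_{J⁻(B)}, (1/ν(B))·ν|_B) and the pair (μ_{Bᶜ}, ν_{Bᶜ}) := ((1/ν(Bᶜ))·μ|_{J⁻(B)ᶜ}, (1/ν(Bᶜ))·ν|_{Bᶜ}) are pairs of probability measures, and each pair again satisfies the same condition: ν_B(J⁺(A')) ≥ μ_B(A') and μ_B(J⁻(B')) ≥ ν_B(B') for all subsets A' ⊆ X and B' ⊆ Y, and likewise for (μ_{Bᶜ}, ν_{Bᶜ}). -/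
open MeasureTheory Set

/-- **Lemma (Suhr, Lemma 3.1, second case).** If probability measures `μ`, `ν` satisfy
`ν(J⁺(A')) ≥ μ(A')` and `μ(J⁻(B')) ≥ ν(B')` for all subsets, and `B` is measurable with
`J⁻(B)` measurable and `0 < ν(B) = μ(J⁻(B)) < 1`, then the renormalized restricted pairs
`(μ_B, ν_B)` and `(μ_{Bᶜ}, ν_{Bᶜ})` are probability measures satisfying the same
inequalities. -/
theorem restricted_pairs_satisfy_condition_of_saturated_set'
    {X Y : Type*} [MeasurableSpace X] [MeasurableSpace Y]
    (J : Set (X × Y)) (μ : Measure X) (ν : Measure Y)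
    [IsProbabilityMeasure μ] [IsProbabilityMeasure ν]
    (hν : ∀ A' : Set X, μ A' ≤ ν {y | ∃ x ∈ A', (x, y) ∈ J})
    (hμ : ∀ B' : Set Y, ν B' ≤ μ {x | ∃ y ∈ B', (x, y) ∈ J})
    (B : Set Y) (hB : MeasurableSet B)
    (hJB : MeasurableSet {x | ∃ y ∈ B, (x, y) ∈ J})
    (h0 : 0 < ν B) (heq : ν B = μ {x | ∃ y ∈ B, (x, y) ∈ J}) (h1 : ν B < 1) :
    (IsProbabilityMeasure ((ν B)⁻¹ • μ.restrict {x | ∃ y ∈ B, (x, y) ∈ J}) ∧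
     IsProbabilityMeasure ((ν B)⁻¹ • ν.restrict B) ∧
     (∀ A' : Set X,
        ((ν B)⁻¹ • μ.restrict {x | ∃ y ∈ B, (x, y) ∈ J}) A' ≤
          ((ν B)⁻¹ • ν.restrict B) {y | ∃ x ∈ A', (x, y) ∈ J}) ∧
     (∀ B' : Set Y,
        ((ν B)⁻¹ • ν.restrict B) B' ≤
          ((ν B)⁻¹ • μ.restrict {x | ∃ y ∈ B, (x, y) ∈ J}) {x | ∃ y ∈ B', (x, y) ∈ J})) ∧
    (IsProbabilityMeasure ((ν Bᶜ)⁻¹ • μ.restrict {x | ∃ y ∈ B, (x, y) ∈ J}ᶜ) ∧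
     IsProbabilityMeasure ((ν Bᶜ)⁻¹ • ν.restrict Bᶜ) ∧
     (∀ A' : Set X,
        ((ν Bᶜ)⁻¹ • μ.restrict {x | ∃ y ∈ B, (x, y) ∈ J}ᶜ) A' ≤
          ((ν Bᶜ)⁻¹ • ν.restrict Bᶜ) {y | ∃ x ∈ A', (x, y) ∈ J}) ∧
     (∀ B' : Set Y,
        ((ν Bᶜ)⁻¹ • ν.restrict Bᶜ) B' ≤
          ((ν Bᶜ)⁻¹ • μ.restrict {x | ∃ y ∈ B, (x, y) ∈ J}ᶜ) {x | ∃ y ∈ B', (x, y) ∈ J})) := by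
  set C : Set X := {x | ∃ y ∈ B, (x, y) ∈ J} with hCdef
  have hνB_ne : ν B ≠ 0 := h0.ne'
  have hνB_top : ν B ≠ ⊤ := (measure_ne_top ν B)
  have hμC : μ C = ν B := heq.symm
  have hμCc : μ Cᶜ = ν Bᶜ := by
    rw [measure_compl hJB (measure_ne_top μ C), measure_compl hB (measure_ne_top ν B),
      measure_univ, measure_univ, hμC]
  have hνBc_ne : ν Bᶜ ≠ 0 := by
    rw [measure_compl hB (measure_ne_top ν B), measure_univ]
    exact (tsub_pos_of_lt h1).ne'
  have hνBc_top : ν Bᶜ ≠ ⊤ := measure_ne_top ν Bᶜ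
  -- hard direction 1: for A ⊆ C, μ A ≤ ν (J⁺(A) ∩ B)
  have key1 : ∀ A : Set X, A ⊆ C → μ A ≤ ν ({y | ∃ x ∈ A, (x, y) ∈ J} ∩ B) := by
    intro A hA
    set S : Set Y := {y | ∃ x ∈ A ∪ Cᶜ, (x, y) ∈ J} with hS
    have hSB : S ∩ B = {y | ∃ x ∈ A, (x, y) ∈ J} ∩ B := by
      ext y
      constructor
      · rintro ⟨⟨x, hx, hxy⟩, hyB⟩
        rcases hx with hx | hx
        · exact ⟨⟨x, hx, hxy⟩, hyB⟩
        · exact absurd ⟨y, hyB, hxy⟩ hx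
      · rintro ⟨⟨x, hx, hxy⟩, hyB⟩
        exact ⟨⟨x, Or.inl hx, hxy⟩, hyB⟩
    have e1 : (A ∪ Cᶜ) ∩ C = A := by
      ext x
      constructor
      · rintro ⟨hx | hx, hxC⟩
        · exact hx
        · exact absurd hxC hx
      · intro hx; exact ⟨Or.inl hx, hA hx⟩
    have e2 : (A ∪ Cᶜ) \ C = Cᶜ := by
      ext x
      constructor
      · rintro ⟨_, hx⟩; exact hx
      · intro hx; exact ⟨Or.inr hx, hx⟩
    have hsplitX : μ A + μ Cᶜ = μ (A ∪ Cᶜ) := by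
      have h := measure_inter_add_diff (μ := μ) (A ∪ Cᶜ) hJB
      rw [e1, e2] at h
      exact h
    have hsplitY : ν S = ν (S ∩ B) + ν (S \ B) := (measure_inter_add_diff S hB).symm
    have h3 : ν (S \ B) ≤ μ Cᶜ := by
      rw [hμCc]
      exact measure_mono (fun y hy => hy.2)
    have chain : μ A + μ Cᶜ ≤ ν ({y | ∃ x ∈ A, (x, y) ∈ J} ∩ B) + μ Cᶜ := by
      calc μ A + μ Cᶜ = μ (A ∪ Cᶜ) := hsplitX
        _ ≤ ν S := hν (A ∪ Cᶜ)
        _ = ν (S ∩ B) + ν (S \ B) := hsplitY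
        _ ≤ ν ({y | ∃ x ∈ A, (x, y) ∈ J} ∩ B) + μ Cᶜ := by
            rw [hSB]; exact add_le_add le_rfl h3
    exact (ENNReal.add_le_add_iff_right (measure_ne_top μ Cᶜ)).mp chain
  -- hard direction 2: for B'' ⊆ Bᶜ, ν B'' ≤ μ (J⁻(B'') ∩ Cᶜ)
  have key2 : ∀ B'' : Set Y, B'' ⊆ Bᶜ → ν B'' ≤ μ ({x | ∃ y ∈ B'', (x, y) ∈ J} ∩ Cᶜ) := by
    intro B'' hB''
    set T : Set X := {x | ∃ y ∈ B'' ∪ B, (x, y) ∈ J} with hT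
    have e1 : (B'' ∪ B) ∩ B = B := by
      ext y
      constructor
      · rintro ⟨_, hy⟩; exact hy
      · intro hy; exact ⟨Or.inr hy, hy⟩
    have e2 : (B'' ∪ B) \ B = B'' := by
      ext y
      constructor
      · rintro ⟨hy | hy, hyB⟩
        · exact hy
        · exact absurd hy hyB
      · intro hy; exact ⟨Or.inl hy, hB'' hy⟩
    have hsplitY : ν B + ν B'' = ν (B'' ∪ B) := by
      have h := measure_inter_add_diff (μ := ν) (B'' ∪ B) hB
      rw [e1, e2] at h
      exact h
    have eT1 : T ∩ C = C := by
      apply inter_eq_self_of_subset_right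
      rintro x ⟨y, hyB, hxy⟩
      exact ⟨y, Or.inr hyB, hxy⟩
    have eT2 : T \ C ⊆ {x | ∃ y ∈ B'', (x, y) ∈ J} ∩ Cᶜ := by
      rintro x ⟨⟨y, hy, hxy⟩, hxC⟩
      rcases hy with hy | hy
      · exact ⟨⟨y, hy, hxy⟩, hxC⟩
      · exact absurd ⟨y, hy, hxy⟩ hxC
    have hsplitX : μ T = μ C + μ (T \ C) := by
      have h := measure_inter_add_diff (μ := μ) T hJB
      rw [eT1] at h
      exact h.symm
    have chain : ν B + ν B'' ≤ ν B + μ ({x | ∃ y ∈ B'', (x, y) ∈ J} ∩ Cᶜ) := by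
      calc ν B + ν B'' = ν (B'' ∪ B) := hsplitY
        _ ≤ μ T := hμ (B'' ∪ B)
        _ = μ C + μ (T \ C) := hsplitX
        _ ≤ ν B + μ ({x | ∃ y ∈ B'', (x, y) ∈ J} ∩ Cᶜ) := by
            rw [hμC]; exact add_le_add le_rfl (measure_mono eT2)
    exact (ENNReal.add_le_add_iff_left hνB_top).mp chain
  refine ⟨⟨⟨?_⟩, ⟨?_⟩, ?_, ?_⟩, ⟨⟨?_⟩, ⟨?_⟩, ?_, ?_⟩⟩
  · rw [Measure.smul_apply, Measure.restrict_apply_univ, smul_eq_mul, hμC,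
      ENNReal.inv_mul_cancel hνB_ne hνB_top]
  · rw [Measure.smul_apply, Measure.restrict_apply_univ, smul_eq_mul,
      ENNReal.inv_mul_cancel hνB_ne hνB_top]
  · -- μ_B(A') ≤ ν_B(J⁺(A'))
    intro A'
    rw [Measure.smul_apply, Measure.smul_apply, smul_eq_mul, smul_eq_mul]
    apply mul_le_mul_right
    rw [Measure.restrict_apply' hJB, Measure.restrict_apply' hB]
    calc μ (A' ∩ C) ≤ ν ({y | ∃ x ∈ A' ∩ C, (x, y) ∈ J} ∩ B) :=
          key1 (A' ∩ C) inter_subset_right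
      _ ≤ ν ({y | ∃ x ∈ A', (x, y) ∈ J} ∩ B) := by
          apply measure_mono
          rintro y ⟨⟨x, hx, hxy⟩, hyB⟩
          exact ⟨⟨x, hx.1, hxy⟩, hyB⟩
  · -- ν_B(B') ≤ μ_B(J⁻(B'))
    intro B'
    rw [Measure.smul_apply, Measure.smul_apply, smul_eq_mul, smul_eq_mul]
    apply mul_le_mul_right
    rw [Measure.restrict_apply' hJB, Measure.restrict_apply' hB]
    calc ν (B' ∩ B) ≤ μ {x | ∃ y ∈ B' ∩ B, (x, y) ∈ J} := hμ (B' ∩ B)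
      _ ≤ μ ({x | ∃ y ∈ B', (x, y) ∈ J} ∩ C) := by
          apply measure_mono
          rintro x ⟨y, hy, hxy⟩
          exact ⟨⟨y, hy.1, hxy⟩, ⟨y, hy.2, hxy⟩⟩
  · rw [Measure.smul_apply, Measure.restrict_apply_univ, smul_eq_mul, hμCc,
      ENNReal.inv_mul_cancel hνBc_ne hνBc_top]
  · rw [Measure.smul_apply, Measure.restrict_apply_univ, smul_eq_mul,
      ENNReal.inv_mul_cancel hνBc_ne hνBc_top]
  · -- μ_{Bᶜ}(A') ≤ ν_{Bᶜ}(J⁺(A'))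
    intro A'
    rw [Measure.smul_apply, Measure.smul_apply, smul_eq_mul, smul_eq_mul]
    apply mul_le_mul_right
    rw [Measure.restrict_apply' hJB.compl, Measure.restrict_apply' hB.compl]
    calc μ (A' ∩ Cᶜ) ≤ ν {y | ∃ x ∈ A' ∩ Cᶜ, (x, y) ∈ J} := hν (A' ∩ Cᶜ)
      _ ≤ ν ({y | ∃ x ∈ A', (x, y) ∈ J} ∩ Bᶜ) := by
          apply measure_mono
          rintro y ⟨x, hx, hxy⟩
          exact ⟨⟨x, hx.1, hxy⟩, fun hyB => hx.2 ⟨y, hyB, hxy⟩⟩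
  · -- ν_{Bᶜ}(B') ≤ μ_{Bᶜ}(J⁻(B'))
    intro B'
    rw [Measure.smul_apply, Measure.smul_apply, smul_eq_mul, smul_eq_mul]
    apply mul_le_mul_right
    rw [Measure.restrict_apply' hJB.compl, Measure.restrict_apply' hB.compl]
    calc ν (B' ∩ Bᶜ) ≤ μ ({y' | ∃ y ∈ B' ∩ Bᶜ, (y', y).1 = (y', y).1 ∧ (y', y) ∈ J} ∩ Cᶜ) := by
          have := key2 (B' ∩ Bᶜ) inter_subset_right
          simpa using this
      _ ≤ μ ({x | ∃ y ∈ B', (x, y) ∈ J} ∩ Cᶜ) := by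
          apply measure_mono
          rintro x ⟨⟨y, hy, _, hxy⟩, hxC⟩
          exact ⟨⟨y, hy.1, hxy⟩, hxC⟩
end

section
/- Let N ≥ 1 and let J ⊆ {1,…,N} × {1,…,N} satisfy #{i : ∃ j ∈ A', (i,j) ∈ J} ≥ #A' and #{j : ∃ i ∈ A', (i,j) ∈ J} ≥ #A' for every subset A' ⊆ {1,…,N}. Suppose A ⊆ {1,…,N} is a subset with {i : ∃ j ∈ A, (i,j) ∈ J} = A. Then J_A := J ∩ (A × A) satisfies the analogous two conditions relative to A, i.e. for every B ⊆ A one has #{i ∈ A : ∃ j ∈ B, (i,j) ∈ J_A} ≥ #B and #{j ∈ A : ∃ i ∈ B, (i,j) ∈ J_A} ≥ #B; and J_{Aᶜ} := J ∩ (Aᶜ × Aᶜ) satisfies the analogous two conditions relative to the complement Aᶜ = {1,…,N} \ A. -/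
open Set

/-- **(Step in the proof of Suhr, Lemma 3.2.)** Suppose `J ⊆ {1,…,N} × {1,…,N}` satisfies the
Hall-type conditions `#π₁(π₂⁻¹(A') ∩ J) ≥ #A'` and `#π₂(π₁⁻¹(A') ∩ J) ≥ #A'` for all
`A' ⊆ {1,…,N}`, and `A` satisfies `π₁(π₂⁻¹(A) ∩ J) = A`. Then `J_A := J ∩ (A × A)`
satisfies the analogous conditions relative to `A`, and `J_{Aᶜ} := J ∩ (Aᶜ × Aᶜ)` satisfies
the analogous conditions relative to `Aᶜ`. -/
theorem restricted_sets_satisfy_hall_conditions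
    (N : ℕ) (hN : 1 ≤ N) (J : Set (Fin N × Fin N))
    (h1 : ∀ A' : Set (Fin N), A'.ncard ≤ {i | ∃ j ∈ A', (i, j) ∈ J}.ncard)
    (h2 : ∀ A' : Set (Fin N), A'.ncard ≤ {j | ∃ i ∈ A', (i, j) ∈ J}.ncard)
    (A : Set (Fin N)) (hA : {i | ∃ j ∈ A, (i, j) ∈ J} = A) :
    (∀ B ⊆ A,
      B.ncard ≤ {i | i ∈ A ∧ ∃ j ∈ B, (i, j) ∈ J ∩ A ×ˢ A}.ncard ∧
      B.ncard ≤ {j | j ∈ A ∧ ∃ i ∈ B, (i, j) ∈ J ∩ A ×ˢ A}.ncard) ∧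
    (∀ C ⊆ Aᶜ,
      C.ncard ≤ {i | i ∈ Aᶜ ∧ ∃ j ∈ C, (i, j) ∈ J ∩ Aᶜ ×ˢ Aᶜ}.ncard ∧
      C.ncard ≤ {j | j ∈ Aᶜ ∧ ∃ i ∈ C, (i, j) ∈ J ∩ Aᶜ ×ˢ Aᶜ}.ncard) := by
  -- Key fact: if `j ∈ A` and `(i, j) ∈ J`, then `i ∈ A`.
  have K1 : ∀ i j : Fin N, j ∈ A → (i, j) ∈ J → i ∈ A := by
    intro i j hj hij
    have : i ∈ {i | ∃ j ∈ A, (i, j) ∈ J} := ⟨j, hj, hij⟩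
    rwa [hA] at this
  -- Contrapositive: if `i ∉ A` and `(i, j) ∈ J`, then `j ∉ A`.
  have K2 : ∀ i j : Fin N, i ∉ A → (i, j) ∈ J → j ∉ A := by
    intro i j hi hij hj
    exact hi (K1 i j hj hij)
  constructor
  · intro B hB
    constructor
    · -- rows reached from columns `B` are automatically in `A`
      have hset : {i | i ∈ A ∧ ∃ j ∈ B, (i, j) ∈ J ∩ A ×ˢ A} = {i | ∃ j ∈ B, (i, j) ∈ J} := by
        ext i
        constructor
        · rintro ⟨_, j, hjB, hij, _⟩
          exact ⟨j, hjB, hij⟩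
        · rintro ⟨j, hjB, hij⟩
          have hjA : j ∈ A := hB hjB
          have hiA : i ∈ A := K1 i j hjA hij
          exact ⟨hiA, j, hjB, ⟨hij, hiA, hjA⟩⟩
      rw [hset]
      calc B.ncard ≤ {i | ∃ j ∈ B, (i, j) ∈ J}.ncard := h1 B
        _ = _ := rfl
    · -- columns reached from rows `B`, restricted to `A`
      have hset : {j | j ∈ A ∧ ∃ i ∈ B, (i, j) ∈ J ∩ A ×ˢ A}
          = {j | ∃ i ∈ B, (i, j) ∈ J} ∩ A := by
        ext j
        constructor
        · rintro ⟨hjA, i, hiB, hij, _⟩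
          exact ⟨⟨i, hiB, hij⟩, hjA⟩
        · rintro ⟨⟨i, hiB, hij⟩, hjA⟩
          exact ⟨hjA, i, hiB, ⟨hij, hB hiB, hjA⟩⟩
      rw [hset]
      -- apply h2 to `B ∪ Aᶜ`
      have hsub : {j | ∃ i ∈ B ∪ Aᶜ, (i, j) ∈ J}
          ⊆ ({j | ∃ i ∈ B, (i, j) ∈ J} ∩ A) ∪ Aᶜ := by
        rintro j ⟨i, hi, hij⟩
        rcases hi with hiB | hiC
        · by_cases hjA : j ∈ A
          · exact Or.inl ⟨⟨i, hiB, hij⟩, hjA⟩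
          · exact Or.inr hjA
        · exact Or.inr (K2 i j hiC hij)
      have hdisj : Disjoint B Aᶜ := by
        rw [Set.disjoint_compl_right_iff_subset]; exact hB
      have e1 : (B ∪ Aᶜ).ncard = B.ncard + Aᶜ.ncard :=
        Set.ncard_union_eq hdisj (Set.toFinite _) (Set.toFinite _)
      have e2 : (({j | ∃ i ∈ B, (i, j) ∈ J} ∩ A) ∪ Aᶜ).ncard
          ≤ ({j | ∃ i ∈ B, (i, j) ∈ J} ∩ A).ncard + Aᶜ.ncard :=
        Set.ncard_union_le _ _
      have e3 : (B ∪ Aᶜ).ncard ≤ {j | ∃ i ∈ B ∪ Aᶜ, (i, j) ∈ J}.ncard := h2 _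
      have e4 : {j | ∃ i ∈ B ∪ Aᶜ, (i, j) ∈ J}.ncard
          ≤ (({j | ∃ i ∈ B, (i, j) ∈ J} ∩ A) ∪ Aᶜ).ncard :=
        Set.ncard_le_ncard hsub (Set.toFinite _)
      omega
  · intro C hC
    constructor
    · -- rows reached from columns `C`, restricted to `Aᶜ`
      have hset : {i | i ∈ Aᶜ ∧ ∃ j ∈ C, (i, j) ∈ J ∩ Aᶜ ×ˢ Aᶜ}
          = {i | ∃ j ∈ C, (i, j) ∈ J} ∩ Aᶜ := by
        ext i
        constructor
        · rintro ⟨hiC, j, hjC, hij, _⟩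
          exact ⟨⟨j, hjC, hij⟩, hiC⟩
        · rintro ⟨⟨j, hjC, hij⟩, hiC⟩
          exact ⟨hiC, j, hjC, ⟨hij, hiC, hC hjC⟩⟩
      rw [hset]
      -- apply h1 to `A ∪ C`
      have hsub : {i | ∃ j ∈ A ∪ C, (i, j) ∈ J}
          ⊆ A ∪ ({i | ∃ j ∈ C, (i, j) ∈ J} ∩ Aᶜ) := by
        rintro i ⟨j, hj, hij⟩
        rcases hj with hjA | hjC
        · exact Or.inl (K1 i j hjA hij)
        · by_cases hiA : i ∈ A
          · exact Or.inl hiA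
          · exact Or.inr ⟨⟨j, hjC, hij⟩, hiA⟩
      have hdisj : Disjoint A C :=
        Set.disjoint_of_subset_right hC disjoint_compl_right
      have e1 : (A ∪ C).ncard = A.ncard + C.ncard :=
        Set.ncard_union_eq hdisj (Set.toFinite _) (Set.toFinite _)
      have e2 : (A ∪ ({i | ∃ j ∈ C, (i, j) ∈ J} ∩ Aᶜ)).ncard
          ≤ A.ncard + ({i | ∃ j ∈ C, (i, j) ∈ J} ∩ Aᶜ).ncard :=
        Set.ncard_union_le _ _
      have e3 : (A ∪ C).ncard ≤ {i | ∃ j ∈ A ∪ C, (i, j) ∈ J}.ncard := h1 _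
      have e4 : {i | ∃ j ∈ A ∪ C, (i, j) ∈ J}.ncard
          ≤ (A ∪ ({i | ∃ j ∈ C, (i, j) ∈ J} ∩ Aᶜ)).ncard :=
        Set.ncard_le_ncard hsub (Set.toFinite _)
      omega
    · -- columns reached from rows `C ⊆ Aᶜ` are automatically in `Aᶜ`
      have hset : {j | j ∈ Aᶜ ∧ ∃ i ∈ C, (i, j) ∈ J ∩ Aᶜ ×ˢ Aᶜ}
          = {j | ∃ i ∈ C, (i, j) ∈ J} := by
        ext j
        constructor
        · rintro ⟨_, i, hiC, hij, _⟩
          exact ⟨i, hiC, hij⟩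
        · rintro ⟨i, hiC, hij⟩
          have hjC : j ∈ Aᶜ := K2 i j (hC hiC) hij
          exact ⟨hjC, i, hiC, ⟨hij, hC hiC, hjC⟩⟩
      rw [hset]
      exact h2 C
end

section
/- Let X and Y be Polish spaces and J ⊆ X × Y an arbitrary subset. Let μ = Σᵢ₌₁^m aᵢ δ_{xᵢ} and ν = Σⱼ₌₁^n bⱼ δ_{yⱼ} be finitely supported Borel probability measures on X and Y respectively (with aᵢ, bⱼ > 0). Assume that ν(J⁺(A)) ≥ μ(A) for every subset A ⊆ {x₁,…,x_m} and μ(J⁻(B)) ≥ ν(B) for every subset B ⊆ {y₁,…,y_n}. Then μ and ν are J-related, i.e. there exists a coupling π of μ and ν with π(J) = 1. -/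
open MeasureTheory Set
open scoped ENNReal Classical

namespace GaleAux
variable {ι κ : Type*}

noncomputable def nbr (R : ι → κ → Prop) (t : Finset κ) (A : Finset ι) : Finset κ :=
  t.filter (fun j => ∃ i ∈ A, R i j)

lemma nbr_mono (R : ι → κ → Prop) (t : Finset κ) {A B : Finset ι} (h : A ⊆ B) :
    nbr R t A ⊆ nbr R t B := by
  intro j hj
  simp only [nbr, Finset.mem_filter] at hj ⊢
  obtain ⟨hjt, i, hi, hR⟩ := hj
  exact ⟨hjt, i, h hi, hR⟩

lemma nbr_subset (R : ι → κ → Prop) (t : Finset κ) (A : Finset ι) :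
    nbr R t A ⊆ t := Finset.filter_subset _ _

def Hyp (R : ι → κ → Prop) (s : Finset ι) (t : Finset κ) (a : ι → ℝ) (b : κ → ℝ) : Prop :=
  (∀ i ∈ s, 0 ≤ a i) ∧ (∀ j ∈ t, 0 ≤ b j) ∧ (∑ i ∈ s, a i = ∑ j ∈ t, b j) ∧
    ∀ A ⊆ s, ∑ i ∈ A, a i ≤ ∑ j ∈ nbr R t A, b j

def Goal (R : ι → κ → Prop) (s : Finset ι) (t : Finset κ) (a : ι → ℝ) (b : κ → ℝ) : Prop :=
  ∃ w : ι → κ → ℝ, (∀ i j, 0 ≤ w i j) ∧ (∀ i j, w i j ≠ 0 → i ∈ s ∧ j ∈ t ∧ R i j) ∧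
    (∀ i ∈ s, ∑ j ∈ t, w i j = a i) ∧ ∀ j ∈ t, ∑ i ∈ s, w i j = b j

lemma sum_update (f : ι → ℝ) (A : Finset ι) (i₀ : ι) (v : ℝ) :
    ∑ x ∈ A, Function.update f i₀ v x
      = ∑ x ∈ A, f x + (if i₀ ∈ A then v - f i₀ else 0) := by
  by_cases h : i₀ ∈ A
  · rw [Finset.sum_update_of_mem h, if_pos h, ← Finset.sum_erase_add A f h,
      Finset.sdiff_singleton_eq_erase]
    ring
  · rw [if_neg h, add_zero]
    exact Finset.sum_congr rfl fun x hx => Function.update_of_ne (by rintro rfl; exact h hx) _ _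

/-- Splitting along a tight set. -/
lemma gale_split (R : ι → κ → Prop) (s : Finset ι) (t : Finset κ) (a : ι → ℝ) (b : κ → ℝ)
    (IH : ∀ (s' : Finset ι) (t' : Finset κ), s'.card + t'.card < s.card + t.card →
      Hyp R s' t' a b → Goal R s' t' a b)
    (h : Hyp R s t a b) (A : Finset ι) (hAs : A ⊂ s) (hAne : A.Nonempty)
    (htight : ∑ i ∈ A, a i = ∑ j ∈ nbr R t A, b j) : Goal R s t a b := by
  obtain ⟨ha, hb, htot, hHall⟩ := h
  set NA := nbr R t A with hNA
  -- Subproblem 1 : rows A, columns NA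
  have hnbr1 : ∀ A' ⊆ A, nbr R NA A' = nbr R t A' := by
    intro A' hA'
    ext j
    simp only [nbr, Finset.mem_filter, hNA]
    constructor
    · rintro ⟨⟨hjt, -⟩, hx⟩; exact ⟨hjt, hx⟩
    · rintro ⟨hjt, i, hi, hR⟩; exact ⟨⟨hjt, i, hA' hi, hR⟩, i, hi, hR⟩
  have hyp1 : Hyp R A NA a b := by
    refine ⟨fun i hi => ha i (hAs.subset hi), fun j hj => hb j (nbr_subset _ _ _ hj), htight,
      fun A' hA' => ?_⟩
    rw [hnbr1 A' hA']
    exact hHall A' (hA'.trans hAs.subset)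
  have hcard1 : A.card + NA.card < s.card + t.card := by
    have h1 : A.card < s.card := Finset.card_lt_card hAs
    have h2 : NA.card ≤ t.card := Finset.card_le_card (nbr_subset _ _ _)
    omega
  obtain ⟨w₁, hw₁0, hw₁s, hw₁r, hw₁c⟩ := IH A NA hcard1 hyp1
  -- Subproblem 2 : rows s \ A, columns t \ NA
  have hNAsub : NA ⊆ t := nbr_subset _ _ _
  have htot2 : ∑ i ∈ s \ A, a i = ∑ j ∈ t \ NA, b j := by
    rw [Finset.sum_sdiff_eq_sub hAs.subset, Finset.sum_sdiff_eq_sub hNAsub]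
    rw [htot, htight]
  have hyp2 : Hyp R (s \ A) (t \ NA) a b := by
    refine ⟨fun i hi => ha i (Finset.sdiff_subset hi), fun j hj => hb j (Finset.sdiff_subset hj),
      htot2, fun A' hA' => ?_⟩
    have hA's : A' ⊆ s := hA'.trans Finset.sdiff_subset
    have hdisj : Disjoint A' A := by
      refine Finset.disjoint_left.2 fun i hi hiA => ?_
      exact (Finset.mem_sdiff.1 (hA' hi)).2 hiA
    have hUnion := hHall (A' ∪ A) (Finset.union_subset hA's hAs.subset)
    rw [Finset.sum_union hdisj] at hUnion
    have hNAsub' : NA ⊆ nbr R t (A' ∪ A) := nbr_mono R t Finset.subset_union_right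
    have hsplit : ∑ j ∈ nbr R t (A' ∪ A), b j
        = ∑ j ∈ NA, b j + ∑ j ∈ nbr R t (A' ∪ A) \ NA, b j := by
      rw [← Finset.sum_sdiff hNAsub']
      ring
    have hsubset2 : nbr R t (A' ∪ A) \ NA ⊆ nbr R (t \ NA) A' := by
      intro j hj
      obtain ⟨hj1, hj2⟩ := Finset.mem_sdiff.1 hj
      simp only [nbr, Finset.mem_filter, Finset.mem_union, Finset.mem_sdiff] at hj1 ⊢
      obtain ⟨hjt, i, hi, hR⟩ := hj1
      refine ⟨⟨hjt, hj2⟩, i, ?_, hR⟩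
      rcases hi with hi | hi
      · exact hi
      · exact absurd (Finset.mem_filter.2 ⟨hjt, i, hi, hR⟩) hj2
    have hmono : ∑ j ∈ nbr R t (A' ∪ A) \ NA, b j ≤ ∑ j ∈ nbr R (t \ NA) A', b j := by
      refine Finset.sum_le_sum_of_subset_of_nonneg hsubset2 fun j hj _ => ?_
      exact hb j (Finset.sdiff_subset (Finset.filter_subset _ _ hj))
    rw [hsplit] at hUnion
    linarith [hUnion, hmono, htight]
  have hcard2 : (s \ A).card + (t \ NA).card < s.card + t.card := by
    have h1 : (s \ A).card < s.card := by
      have := Finset.card_sdiff_of_subset hAs.subset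
      have h2 := Finset.card_pos.2 hAne
      have h3 := Finset.card_le_card hAs.subset
      omega
    have h2 : (t \ NA).card ≤ t.card := Finset.card_le_card Finset.sdiff_subset
    omega
  obtain ⟨w₂, hw₂0, hw₂s, hw₂r, hw₂c⟩ := IH (s \ A) (t \ NA) hcard2 hyp2
  -- combine
  refine ⟨fun i j => w₁ i j + w₂ i j, fun i j => add_nonneg (hw₁0 i j) (hw₂0 i j), ?_, ?_, ?_⟩
  · intro i j hij
    rcases ne_or_eq (w₁ i j) 0 with h1 | h1
    · obtain ⟨hi, hj, hR⟩ := hw₁s i j h1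
      exact ⟨hAs.subset hi, hNAsub hj, hR⟩
    · have h2 : w₂ i j ≠ 0 := by intro h2; exact hij (by simp [h1, h2])
      obtain ⟨hi, hj, hR⟩ := hw₂s i j h2
      exact ⟨Finset.sdiff_subset hi, Finset.sdiff_subset hj, hR⟩
  · intro i hi
    rw [Finset.sum_add_distrib]
    by_cases hiA : i ∈ A
    · have e1 : ∑ j ∈ t, w₁ i j = a i := by
        rw [← hw₁r i hiA]
        exact (Finset.sum_subset hNAsub fun j hjt hjn => by
          by_contra hne
          exact hjn (hw₁s i j hne).2.1).symm
      have e2 : ∑ j ∈ t, w₂ i j = 0 := by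
        refine Finset.sum_eq_zero fun j hj => ?_
        by_contra hne
        exact (Finset.mem_sdiff.1 (hw₂s i j hne).1).2 hiA
      rw [e1, e2, add_zero]
    · have hi2 : i ∈ s \ A := Finset.mem_sdiff.2 ⟨hi, hiA⟩
      have e1 : ∑ j ∈ t, w₁ i j = 0 := by
        refine Finset.sum_eq_zero fun j hj => ?_
        by_contra hne
        exact hiA (hw₁s i j hne).1
      have e2 : ∑ j ∈ t, w₂ i j = a i := by
        rw [← hw₂r i hi2]
        exact (Finset.sum_subset Finset.sdiff_subset fun j hjt hjn => by
          by_contra hne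
          exact hjn (hw₂s i j hne).2.1).symm
      rw [e1, e2, zero_add]
  · intro j hj
    rw [Finset.sum_add_distrib]
    by_cases hjA : j ∈ NA
    · have e1 : ∑ i ∈ s, w₁ i j = b j := by
        rw [← hw₁c j hjA]
        exact (Finset.sum_subset hAs.subset fun i hit hin => by
          by_contra hne
          exact hin (hw₁s i j hne).1).symm
      have e2 : ∑ i ∈ s, w₂ i j = 0 := by
        refine Finset.sum_eq_zero fun i hi => ?_
        by_contra hne
        exact (Finset.mem_sdiff.1 (hw₂s i j hne).2.1).2 hjA
      rw [e1, e2, add_zero]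
    · have hj2 : j ∈ t \ NA := Finset.mem_sdiff.2 ⟨hj, hjA⟩
      have e1 : ∑ i ∈ s, w₁ i j = 0 := by
        refine Finset.sum_eq_zero fun i hi => ?_
        by_contra hne
        exact hjA (hw₁s i j hne).2.1
      have e2 : ∑ i ∈ s, w₂ i j = b j := by
        rw [← hw₂c j hj2]
        exact (Finset.sum_subset Finset.sdiff_subset fun i hit hin => by
          by_contra hne
          exact hin (hw₂s i j hne).1).symm
      rw [e1, e2, zero_add]

/-- Gale's feasibility theorem for the transportation problem. -/
lemma gale (R : ι → κ → Prop) (n : ℕ) :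
    ∀ (s : Finset ι) (t : Finset κ), s.card + t.card ≤ n →
      ∀ (a : ι → ℝ) (b : κ → ℝ), Hyp R s t a b → Goal R s t a b := by
  induction n with
  | zero =>
    intro s t hc a b h
    obtain ⟨ha, hb, htot, hHall⟩ := h
    have hs : s = ∅ := Finset.card_eq_zero.1 (by omega)
    have ht : t = ∅ := Finset.card_eq_zero.1 (by omega)
    exact ⟨0, fun i j => le_refl 0, fun i j hij => absurd rfl hij,
      by simp [hs], by simp [ht]⟩
  | succ n IH =>
    intro s t hc a b h
    obtain ⟨ha, hb, htot, hHall⟩ := h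
    -- trivial case: all masses zero
    by_cases h0 : ∀ i ∈ s, a i = 0
    · have hbz : ∀ j ∈ t, b j = 0 := by
        have : ∑ j ∈ t, b j = 0 := by
          rw [← htot]; exact Finset.sum_eq_zero h0
        exact fun j hj => (Finset.sum_eq_zero_iff_of_nonneg hb).1 this j hj
      refine ⟨0, fun i j => le_refl 0, fun i j hij => absurd rfl hij, ?_, ?_⟩
      · intro i hi; simp [h0 i hi]
      · intro j hj; simp [hbz j hj]
    push_neg at h0
    obtain ⟨i₀, hi₀s, hi₀⟩ := h0
    have hai₀ : 0 < a i₀ := lt_of_le_of_ne (ha i₀ hi₀s) (Ne.symm hi₀)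
    have IH' : ∀ (s' : Finset ι) (t' : Finset κ), s'.card + t'.card < s.card + t.card →
        ∀ (a' : ι → ℝ) (b' : κ → ℝ), Hyp R s' t' a' b' → Goal R s' t' a' b' :=
      fun s' t' hlt a' b' => IH s' t' (by omega) a' b'
    -- if a nonempty proper tight set exists, split
    by_cases htight : ∃ A, A ⊂ s ∧ A.Nonempty ∧ ∑ i ∈ A, a i = ∑ j ∈ nbr R t A, b j
    · obtain ⟨A, hAs, hAne, htA⟩ := htight
      exact gale_split R s t a b (fun s' t' hlt => IH' s' t' hlt a b)
        ⟨ha, hb, htot, hHall⟩ A hAs hAne htA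
    push_neg at htight
    -- find j₀
    have hsingle := hHall {i₀} (Finset.singleton_subset_iff.2 hi₀s)
    rw [Finset.sum_singleton] at hsingle
    have hj₀ : ∃ j₀ ∈ nbr R t {i₀}, 0 < b j₀ := by
      by_contra hcon
      push_neg at hcon
      have : ∑ j ∈ nbr R t {i₀}, b j = 0 :=
        Finset.sum_eq_zero fun j hj =>
          le_antisymm (hcon j hj) (hb j (Finset.filter_subset _ _ hj))
      rw [this] at hsingle; linarith
    obtain ⟨j₀, hj₀mem, hbj₀⟩ := hj₀
    have hj₀t : j₀ ∈ t := Finset.filter_subset _ _ hj₀mem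
    have hRij : R i₀ j₀ := by
      have := (Finset.mem_filter.1 hj₀mem).2
      simpa using this
    -- the candidate minima
    set slack : Finset ι → ℝ := fun A => ∑ j ∈ nbr R t A, b j - ∑ i ∈ A, a i with hslack
    set P : Finset (Finset ι) :=
      s.powerset.filter (fun A => A.Nonempty ∧ i₀ ∉ A ∧ ∃ i ∈ A, R i j₀) with hP
    have hQne : (insert (a i₀) (insert (b j₀) (P.image slack))).Nonempty :=
      ⟨a i₀, Finset.mem_insert_self _ _⟩
    obtain ⟨ε, hεmem, hεmin⟩ : ∃ ε ∈ insert (a i₀) (insert (b j₀) (P.image slack)),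
        ∀ y ∈ insert (a i₀) (insert (b j₀) (P.image slack)), ε ≤ y :=
      ⟨_, Finset.min'_mem _ hQne, fun y hy => Finset.min'_le _ y hy⟩
    have hPproper : ∀ A ∈ P, A ⊂ s ∧ A.Nonempty ∧ i₀ ∉ A ∧ ∃ i ∈ A, R i j₀ := by
      intro A hA
      rw [hP, Finset.mem_filter, Finset.mem_powerset] at hA
      obtain ⟨hAsub, hAne, hi₀A, hex⟩ := hA
      exact ⟨Finset.ssubset_iff_of_subset hAsub |>.2 ⟨i₀, hi₀s, hi₀A⟩, hAne, hi₀A, hex⟩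
    have hslackpos : ∀ A ∈ P, 0 < slack A := by
      intro A hA
      obtain ⟨hAs', hAne, -, -⟩ := hPproper A hA
      have h1 := hHall A hAs'.subset
      have h2 := htight A hAs' hAne
      rw [hslack]; dsimp only
      cases lt_or_eq_of_le h1 with
      | inl h => linarith
      | inr h => exact absurd h h2
    have hεpos : 0 < ε := by
      rcases Finset.mem_insert.1 hεmem with rfl | h'
      · exact hai₀
      rcases Finset.mem_insert.1 h' with rfl | h''
      · exact hbj₀
      obtain ⟨A, hA, rfl⟩ := Finset.mem_image.1 h''
      exact hslackpos A hA
    have hεa : ε ≤ a i₀ := hεmin _ (Finset.mem_insert_self _ _)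
    have hεb : ε ≤ b j₀ := hεmin _ (Finset.mem_insert_of_mem (Finset.mem_insert_self _ _))
    have hεslack : ∀ A ∈ P, ε ≤ slack A := fun A hA =>
      hεmin _ (Finset.mem_insert_of_mem (Finset.mem_insert_of_mem
        (Finset.mem_image_of_mem _ hA)))
    -- the routed instance
    set a' : ι → ℝ := Function.update a i₀ (a i₀ - ε) with ha'
    set b' : κ → ℝ := Function.update b j₀ (b j₀ - ε) with hb'
    have ha'sum : ∀ A : Finset ι, ∑ i ∈ A, a' i
        = ∑ i ∈ A, a i - (if i₀ ∈ A then ε else 0) := by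
      intro A
      rw [ha', sum_update]
      by_cases h : i₀ ∈ A <;> simp [h] <;> ring
    have hb'sum : ∀ B : Finset κ, ∑ j ∈ B, b' j
        = ∑ j ∈ B, b j - (if j₀ ∈ B then ε else 0) := by
      intro B
      rw [hb', sum_update]
      by_cases h : j₀ ∈ B <;> simp [h] <;> ring
    have ha'nn : ∀ i ∈ s, 0 ≤ a' i := by
      intro i hi
      rw [ha']
      by_cases hii : i = i₀
      · subst hii; rw [Function.update_self]; linarith
      · rw [Function.update_of_ne hii]; exact ha i hi
    have hb'nn : ∀ j ∈ t, 0 ≤ b' j := by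
      intro j hj
      rw [hb']
      by_cases hjj : j = j₀
      · subst hjj; rw [Function.update_self]; linarith
      · rw [Function.update_of_ne hjj]; exact hb j hj
    have htot' : ∑ i ∈ s, a' i = ∑ j ∈ t, b' j := by
      rw [ha'sum, hb'sum, if_pos hi₀s, if_pos hj₀t, htot]
    -- Hall for the routed instance
    have hHall' : ∀ A ⊆ s, ∑ i ∈ A, a' i ≤ ∑ j ∈ nbr R t A, b' j := by
      intro A hAsub
      rw [ha'sum, hb'sum]
      by_cases hiA : i₀ ∈ A
      · have hjN : j₀ ∈ nbr R t A := Finset.mem_filter.2 ⟨hj₀t, i₀, hiA, hRij⟩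
        rw [if_pos hiA, if_pos hjN]
        have := hHall A hAsub
        linarith
      · rw [if_neg hiA]
        by_cases hjN : j₀ ∈ nbr R t A
        · rw [if_pos hjN]
          have hAne : A.Nonempty := by
            obtain ⟨-, i, hi, -⟩ := Finset.mem_filter.1 hjN
            exact ⟨i, hi⟩
          have hAP : A ∈ P := by
            rw [hP, Finset.mem_filter, Finset.mem_powerset]
            obtain ⟨-, i, hi, hR⟩ := Finset.mem_filter.1 hjN
            exact ⟨hAsub, hAne, hiA, i, hi, hR⟩
          have := hεslack A hAP
          rw [hslack] at this
          dsimp only at this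
          linarith
        · rw [if_neg hjN]
          have := hHall A hAsub
          linarith
    -- helper for adding the routed mass back
    have hadd : ∀ w' : ι → κ → ℝ,
        (∀ i j, 0 ≤ w' i j) → (∀ i j, w' i j ≠ 0 → i ∈ s ∧ j ∈ t ∧ R i j) →
        (∀ i ∈ s, ∑ j ∈ t, w' i j = a' i) → (∀ j ∈ t, ∑ i ∈ s, w' i j = b' j) →
        Goal R s t a b := by
      intro w' h0 hsupp hr hcsum
      classical
      set e : ι → κ → ℝ := fun i j => if i = i₀ ∧ j = j₀ then ε else 0 with he
      have he_nonneg : ∀ i j, 0 ≤ e i j := by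
        intro i j; rw [he]; dsimp only; split_ifs; exacts [hεpos.le, le_rfl]
      have hrow : ∀ i, ∑ j ∈ t, e i j = if i = i₀ then ε else 0 := by
        intro i
        by_cases hii : i = i₀
        · rw [if_pos hii, he]
          dsimp only
          simp only [hii, true_and]
          rw [Finset.sum_ite_eq' t j₀ fun _ => ε]
          exact if_pos hj₀t
        · rw [if_neg hii, he]
          dsimp only
          exact Finset.sum_eq_zero fun j hj => if_neg (by tauto)
      have hcol : ∀ j, ∑ i ∈ s, e i j = if j = j₀ then ε else 0 := by
        intro j
        by_cases hjj : j = j₀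
        · rw [if_pos hjj, he]
          dsimp only
          simp only [hjj, and_true]
          rw [Finset.sum_ite_eq' s i₀ fun _ => ε]
          exact if_pos hi₀s
        · rw [if_neg hjj, he]
          dsimp only
          exact Finset.sum_eq_zero fun i hi => if_neg (by tauto)
      refine ⟨fun i j => w' i j + e i j,
        fun i j => add_nonneg (h0 i j) (he_nonneg i j), ?_, ?_, ?_⟩
      · intro i j hij
        have hij2 : w' i j + e i j ≠ 0 := hij
        by_cases hij' : i = i₀ ∧ j = j₀
        · obtain ⟨rfl, rfl⟩ := hij'
          exact ⟨hi₀s, hj₀t, hRij⟩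
        · have hez : e i j = 0 := by rw [he]; exact if_neg hij'
          rw [hez, add_zero] at hij2
          exact hsupp i j hij2
      · intro i hi
        show ∑ j ∈ t, (w' i j + e i j) = a i
        rw [Finset.sum_add_distrib, hr i hi, hrow, ha']
        by_cases hii : i = i₀
        · subst hii
          rw [if_pos rfl, Function.update_self]
          ring
        · rw [if_neg hii, Function.update_of_ne hii, add_zero]
      · intro j hj
        show ∑ i ∈ s, (w' i j + e i j) = b j
        rw [Finset.sum_add_distrib, hcsum j hj, hcol, hb']
        by_cases hjj : j = j₀
        · subst hjj
          rw [if_pos rfl, Function.update_self]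
          ring
        · rw [if_neg hjj, Function.update_of_ne hjj, add_zero]
    -- now the three cases for the value of ε
    rcases Finset.mem_insert.1 hεmem with hεval | hεmem'
    · -- case ε = a i₀ : delete row i₀
      have ha'i₀ : a' i₀ = 0 := by rw [ha', Function.update_self, hεval]; ring
      have hsum_erase : ∑ i ∈ s.erase i₀, a' i = ∑ i ∈ s, a' i := by
        rw [← Finset.sum_erase_add s a' hi₀s, ha'i₀, add_zero]
      have hyp' : Hyp R (s.erase i₀) t a' b' := by
        refine ⟨fun i hi => ha'nn i (Finset.erase_subset _ _ hi), hb'nn, ?_, ?_⟩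
        · rw [hsum_erase, htot']
        · intro A hA
          exact hHall' A (hA.trans (Finset.erase_subset _ _))
      have hcd : (s.erase i₀).card + t.card < s.card + t.card := by
        have := Finset.card_erase_of_mem hi₀s
        have := Finset.card_pos.2 ⟨i₀, hi₀s⟩
        omega
      obtain ⟨w', h0, hsupp, hr, hcsum⟩ := IH' (s.erase i₀) t hcd a' b' hyp'
      refine hadd w' h0 (fun i j hij => ?_) (fun i hi => ?_) (fun j hj => ?_)
      · obtain ⟨hi, hj, hR⟩ := hsupp i j hij
        exact ⟨Finset.erase_subset _ _ hi, hj, hR⟩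
      · by_cases hii : i = i₀
        · rw [hii, ha'i₀]
          refine Finset.sum_eq_zero fun j hj => ?_
          by_contra hne
          exact (Finset.mem_erase.1 (hsupp i₀ j hne).1).1 rfl
        · exact hr i (Finset.mem_erase.2 ⟨hii, hi⟩)
      · rw [← hcsum j hj, ← Finset.sum_erase_add s _ hi₀s]
        have : w' i₀ j = 0 := by
          by_contra hne
          exact (Finset.mem_erase.1 (hsupp i₀ j hne).1).1 rfl
        rw [this, add_zero]
    rcases Finset.mem_insert.1 hεmem' with hεval | hεmem''
    · -- case ε = b j₀ : delete column j₀
      have hb'j₀ : b' j₀ = 0 := by rw [hb', Function.update_self, hεval]; ring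
      have hsum_erase : ∑ j ∈ t.erase j₀, b' j = ∑ j ∈ t, b' j :=
        Finset.sum_erase t hb'j₀
      have hnbr_erase : ∀ A : Finset ι, nbr R (t.erase j₀) A = (nbr R t A).erase j₀ := by
        intro A
        ext j
        simp only [nbr, Finset.mem_filter, Finset.mem_erase]
        tauto
      have hyp' : Hyp R s (t.erase j₀) a' b' := by
        refine ⟨ha'nn, fun j hj => hb'nn j (Finset.erase_subset _ _ hj), ?_, ?_⟩
        · rw [hsum_erase, htot']
        · intro A hA
          rw [hnbr_erase A, Finset.sum_erase _ hb'j₀]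
          exact hHall' A hA
      have hcd : s.card + (t.erase j₀).card < s.card + t.card := by
        have := Finset.card_erase_of_mem hj₀t
        have := Finset.card_pos.2 ⟨j₀, hj₀t⟩
        omega
      obtain ⟨w', h0, hsupp, hr, hcsum⟩ := IH' s (t.erase j₀) hcd a' b' hyp'
      refine hadd w' h0 (fun i j hij => ?_) (fun i hi => ?_) (fun j hj => ?_)
      · obtain ⟨hi, hj, hR⟩ := hsupp i j hij
        exact ⟨hi, Finset.erase_subset _ _ hj, hR⟩
      · rw [← hr i hi, ← Finset.sum_erase_add t _ hj₀t]
        have : w' i j₀ = 0 := by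
          by_contra hne
          exact (Finset.mem_erase.1 (hsupp i j₀ hne).2.1).1 rfl
        rw [this, add_zero]
      · by_cases hjj : j = j₀
        · rw [hjj, hb'j₀]
          refine Finset.sum_eq_zero fun i hi => ?_
          by_contra hne
          exact (Finset.mem_erase.1 (hsupp i j₀ hne).2.1).1 rfl
        · exact hcsum j (Finset.mem_erase.2 ⟨hjj, hj⟩)
    · -- case ε = slack A* : a new tight set appears, split
      obtain ⟨A, hAP, hAslack⟩ := Finset.mem_image.1 hεmem''
      obtain ⟨hAs, hAne, hi₀A, i₁, hi₁A, hRi₁⟩ := hPproper A hAP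
      have hj₀N : j₀ ∈ nbr R t A := Finset.mem_filter.2 ⟨hj₀t, i₁, hi₁A, hRi₁⟩
      have htightA : ∑ i ∈ A, a' i = ∑ j ∈ nbr R t A, b' j := by
        rw [ha'sum, hb'sum, if_neg hi₀A, if_pos hj₀N]
        rw [← hAslack, hslack]
        ring
      have hsplit := gale_split R s t a' b'
        (fun s' t' hlt => IH' s' t' hlt a' b')
        ⟨ha'nn, hb'nn, htot', hHall'⟩ A hAs hAne htightA
      obtain ⟨w', h0, hsupp, hr, hcsum⟩ := hsplit
      exact hadd w' h0 hsupp hr hcsum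
end GaleAux

/-- **(Finite-support case in the proof of Suhr, Theorem 2.)** Let `X`, `Y` be Polish spaces,
`J ⊆ X × Y` arbitrary, and let `μ = ∑ aᵢ δ_{xᵢ}` and `ν = ∑ bⱼ δ_{yⱼ}` be finitely supported
probability measures with positive weights. If `ν(J⁺(A)) ≥ μ(A)` for every
`A ⊆ {x₁,…,x_m}` and `μ(J⁻(B)) ≥ ν(B)` for every `B ⊆ {y₁,…,y_n}`, then `μ` and `ν` are
`J`-related. -/
theorem finitely_supported_J_related
    {X Y : Type*}
    [TopologicalSpace X] [PolishSpace X] [MeasurableSpace X] [BorelSpace X]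
    [TopologicalSpace Y] [PolishSpace Y] [MeasurableSpace Y] [BorelSpace Y]
    (J : Set (X × Y)) (m n : ℕ)
    (x : Fin m → X) (y : Fin n → Y) (a : Fin m → ℝ≥0∞) (b : Fin n → ℝ≥0∞)
    (ha : ∀ i, 0 < a i) (hb : ∀ j, 0 < b j)
    (μ : Measure X) (ν : Measure Y)
    [IsProbabilityMeasure μ] [IsProbabilityMeasure ν]
    (hμ : μ = ∑ i, a i • Measure.dirac (x i))
    (hν : ν = ∑ j, b j • Measure.dirac (y j))
    (h1 : ∀ A : Set X, A ⊆ Set.range x → μ A ≤ ν {y' | ∃ x' ∈ A, (x', y') ∈ J})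
    (h2 : ∀ B : Set Y, B ⊆ Set.range y → ν B ≤ μ {x' | ∃ y' ∈ B, (x', y') ∈ J}) :
    ∃ π : Measure (X × Y), IsProbabilityMeasure π ∧
      π.map Prod.fst = μ ∧ π.map Prod.snd = ν ∧ π J = 1 := by
  classical
  -- evaluation of μ and ν on arbitrary sets
  have hμeval : ∀ S : Set X, μ S = ∑ i, a i * Measure.dirac (x i) S := by
    intro S
    rw [hμ, Measure.coe_finset_sum]
    simp [Measure.smul_apply]
  have hνeval : ∀ S : Set Y, ν S = ∑ j, b j * Measure.dirac (y j) S := by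
    intro S
    rw [hν, Measure.coe_finset_sum]
    simp [Measure.smul_apply]
  have haT : ∑ i, a i = 1 := by
    have h := measure_univ (μ := μ)
    rw [hμeval Set.univ] at h
    simpa [Measure.dirac_apply_of_mem (Set.mem_univ _)] using h
  have hbT : ∑ j, b j = 1 := by
    have h := measure_univ (μ := ν)
    rw [hνeval Set.univ] at h
    simpa [Measure.dirac_apply_of_mem (Set.mem_univ _)] using h
  have hane : ∀ i, a i ≠ ⊤ := by
    intro i
    refine ne_top_of_le_ne_top (by simp : (1:ℝ≥0∞) ≠ ⊤) ?_
    rw [← haT]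
    exact Finset.single_le_sum (fun _ _ => zero_le) (Finset.mem_univ i)
  have hbne : ∀ j, b j ≠ ⊤ := by
    intro j
    refine ne_top_of_le_ne_top (by simp : (1:ℝ≥0∞) ≠ ⊤) ?_
    rw [← hbT]
    exact Finset.single_le_sum (fun _ _ => zero_le) (Finset.mem_univ j)
  set R : Fin m → Fin n → Prop := fun i j => (x i, y j) ∈ J with hR
  set aR : Fin m → ℝ := fun i => (a i).toReal with haR
  set bR : Fin n → ℝ := fun j => (b j).toReal with hbR
  -- the Hall condition in ℝ
  have hHall : ∀ A : Finset (Fin m),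
      ∑ i ∈ A, aR i ≤ ∑ j ∈ GaleAux.nbr R Finset.univ A, bR j := by
    intro A
    have key : ∑ i ∈ A, a i ≤ ∑ j ∈ GaleAux.nbr R Finset.univ A, b j := by
      have hsub : (x '' ↑A : Set X) ⊆ Set.range x := by
        rintro _ ⟨i, -, rfl⟩; exact ⟨i, rfl⟩
      have step1 : ∑ i ∈ A, a i ≤ μ (x '' ↑A) := by
        rw [hμeval]
        calc ∑ i ∈ A, a i = ∑ i ∈ A, a i * Measure.dirac (x i) (x '' ↑A) := by
              refine Finset.sum_congr rfl fun i hi => ?_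
              rw [Measure.dirac_apply_of_mem (Set.mem_image_of_mem x (Finset.mem_coe.2 hi)), mul_one]
          _ ≤ ∑ i, a i * Measure.dirac (x i) (x '' ↑A) :=
              Finset.sum_le_sum_of_subset (Finset.subset_univ A)
      have step2 := h1 (x '' ↑A) hsub
      have step3 : ν {y' | ∃ x' ∈ x '' ↑A, (x', y') ∈ J}
          = ∑ j ∈ GaleAux.nbr R Finset.univ A, b j := by
        rw [hνeval, GaleAux.nbr, Finset.sum_filter]
        refine Finset.sum_congr rfl fun j _ => ?_
        by_cases hjm : ∃ i ∈ A, R i j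
        · rw [if_pos hjm]
          obtain ⟨i, hi, hRij⟩ := hjm
          rw [Measure.dirac_apply_of_mem, mul_one]
          exact ⟨x i, ⟨i, by simpa using hi, rfl⟩, hRij⟩
        · rw [if_neg hjm, Measure.dirac_apply]
          have : y j ∉ {y' | ∃ x' ∈ x '' ↑A, (x', y') ∈ J} := by
            rintro ⟨x', ⟨i, hi, rfl⟩, hJ⟩
            exact hjm ⟨i, by simpa using hi, hJ⟩
          rw [Set.indicator_of_notMem this, mul_zero]
      calc ∑ i ∈ A, a i ≤ μ (x '' ↑A) := step1
        _ ≤ ν {y' | ∃ x' ∈ x '' ↑A, (x', y') ∈ J} := step2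
        _ = ∑ j ∈ GaleAux.nbr R Finset.univ A, b j := step3
    have hrhs : ∑ j ∈ GaleAux.nbr R Finset.univ A, b j ≠ ⊤ :=
      (ENNReal.sum_ne_top).2 fun j _ => hbne j
    have := ENNReal.toReal_mono hrhs key
    rwa [ENNReal.toReal_sum (fun i _ => hane i),
      ENNReal.toReal_sum (fun j _ => hbne j)] at this
  have hHyp : GaleAux.Hyp R Finset.univ Finset.univ aR bR := by
    refine ⟨fun i _ => ENNReal.toReal_nonneg, fun j _ => ENNReal.toReal_nonneg, ?_, ?_⟩
    · rw [← ENNReal.toReal_sum (fun i _ => hane i), ← ENNReal.toReal_sum (fun j _ => hbne j),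
        haT, hbT]
    · intro A _
      exact hHall A
  obtain ⟨w, hw0, hwsupp, hwr, hwc⟩ :=
    GaleAux.gale R (m + n) Finset.univ Finset.univ (by simp) aR bR hHyp
  -- build the coupling
  set π : Measure (X × Y) :=
    ∑ i, ∑ j, ENNReal.ofReal (w i j) • Measure.dirac (x i, y j) with hπ
  have hπeval : ∀ S : Set (X × Y),
      π S = ∑ i, ∑ j, ENNReal.ofReal (w i j) * Measure.dirac (x i, y j) S := by
    intro S
    rw [hπ, Measure.coe_finset_sum]
    simp [Measure.coe_finset_sum, Measure.smul_apply]
  have hrow : ∀ i, ∑ j, ENNReal.ofReal (w i j) = a i := by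
    intro i
    rw [← ENNReal.ofReal_sum_of_nonneg (fun j _ => hw0 i j), hwr i (Finset.mem_univ i),
      haR]
    exact ENNReal.ofReal_toReal (hane i)
  have hcol : ∀ j, ∑ i, ENNReal.ofReal (w i j) = b j := by
    intro j
    rw [← ENNReal.ofReal_sum_of_nonneg (fun i _ => hw0 i j), hwc j (Finset.mem_univ j),
      hbR]
    exact ENNReal.ofReal_toReal (hbne j)
  have hπuniv : π Set.univ = 1 := by
    rw [hπeval]
    calc ∑ i, ∑ j, ENNReal.ofReal (w i j) * Measure.dirac (x i, y j) Set.univ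
        = ∑ i, ∑ j, ENNReal.ofReal (w i j) := by
          refine Finset.sum_congr rfl fun i _ => Finset.sum_congr rfl fun j _ => ?_
          rw [Measure.dirac_apply_of_mem (Set.mem_univ _), mul_one]
      _ = ∑ i, a i := Finset.sum_congr rfl fun i _ => hrow i
      _ = 1 := haT
  have hprob : IsProbabilityMeasure π := ⟨hπuniv⟩
  refine ⟨π, hprob, ?_, ?_, ?_⟩
  · ext S hS
    rw [Measure.map_apply measurable_fst hS, hπeval, hμeval]
    refine Finset.sum_congr rfl fun i _ => ?_
    have : ∀ j, Measure.dirac (x i, y j) (Prod.fst ⁻¹' S) = Measure.dirac (x i) S := by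
      intro j
      rw [Measure.dirac_apply, Measure.dirac_apply]
      by_cases hmem : x i ∈ S
      · rw [Set.indicator_of_mem hmem, Set.indicator_of_mem (by simpa using hmem)]
        rfl
      · rw [Set.indicator_of_notMem hmem, Set.indicator_of_notMem (by simpa using hmem)]
    calc ∑ j, ENNReal.ofReal (w i j) * Measure.dirac (x i, y j) (Prod.fst ⁻¹' S)
        = ∑ j, ENNReal.ofReal (w i j) * Measure.dirac (x i) S := by
          refine Finset.sum_congr rfl fun j _ => by rw [this j]
      _ = (∑ j, ENNReal.ofReal (w i j)) * Measure.dirac (x i) S := by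
          rw [Finset.sum_mul]
      _ = a i * Measure.dirac (x i) S := by rw [hrow i]
  · ext S hS
    rw [Measure.map_apply measurable_snd hS, hπeval, hνeval, Finset.sum_comm]
    refine Finset.sum_congr rfl fun j _ => ?_
    have : ∀ i, Measure.dirac (x i, y j) (Prod.snd ⁻¹' S) = Measure.dirac (y j) S := by
      intro i
      rw [Measure.dirac_apply, Measure.dirac_apply]
      by_cases hmem : y j ∈ S
      · rw [Set.indicator_of_mem hmem, Set.indicator_of_mem (by simpa using hmem)]
        rfl
      · rw [Set.indicator_of_notMem hmem, Set.indicator_of_notMem (by simpa using hmem)]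
    calc ∑ i, ENNReal.ofReal (w i j) * Measure.dirac (x i, y j) (Prod.snd ⁻¹' S)
        = ∑ i, ENNReal.ofReal (w i j) * Measure.dirac (y j) S := by
          refine Finset.sum_congr rfl fun i _ => by rw [this i]
      _ = (∑ i, ENNReal.ofReal (w i j)) * Measure.dirac (y j) S := by
          rw [Finset.sum_mul]
      _ = b j * Measure.dirac (y j) S := by rw [hcol j]
  · rw [hπeval]
    calc ∑ i, ∑ j, ENNReal.ofReal (w i j) * Measure.dirac (x i, y j) J
        = ∑ i, ∑ j, ENNReal.ofReal (w i j) := by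
          refine Finset.sum_congr rfl fun i _ => Finset.sum_congr rfl fun j _ => ?_
          by_cases hwz : w i j = 0
          · rw [hwz]; simp
          · rw [Measure.dirac_apply_of_mem (hwsupp i j hwz).2.2, mul_one]
      _ = ∑ i, a i := Finset.sum_congr rfl fun i _ => hrow i
      _ = 1 := haT
end

section
/- Let n ≥ 1, let μ and ν be Borel probability measures on ℝⁿ with finite first moments, and assume μ is absolutely continuous with respect to the Lebesgue measure. Let π be a coupling of μ and ν and let Σ ⊆ ℝⁿ × ℝⁿ be a σ-compact set with π(Σ) = 1. Then π is concentrated on a σ-compact set R ⊆ Σ with π(R) = 1 such that for every (x,y) ∈ R and every r > 0, the point x is a Lebesgue density point of the set C_{y,r} := {x' ∈ ℝⁿ : ∃ y' with |y' − y| ≤ r and (x',y') ∈ Σ}, i.e. lim_{δ→0} Leb(C_{y,r} ∩ B_δ(x)) / Leb(B_δ(x)) = 1, where B_δ(x) denotes the open Euclidean ball of radius δ around x. -/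
open MeasureTheory Set Filter Metric
open scoped ENNReal
open scoped Topology

/-- **Lemma (Suhr, Lemma 3.10; Champion–De Pascale).** Let `μ`, `ν` be probability measures
on `ℝⁿ` with finite first moments, with `μ` absolutely continuous w.r.t. Lebesgue measure.
Let `π` be a coupling of `μ` and `ν` and `Σ` a σ-compact set with `π(Σ) = 1`. Then `π` is
concentrated on a σ-compact set `R ⊆ Σ` such that for all `(x, y) ∈ R` and all `r > 0`,
the point `x` is a Lebesgue density point of
`π₁(Σ ∩ (ℝⁿ × closedBall y r)) = {x' | ∃ y', dist y' y ≤ r ∧ (x', y') ∈ Σ}`. -/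
theorem concentrated_on_lebesgue_points
    (n : ℕ) (hn : 1 ≤ n)
    (μ ν : Measure (EuclideanSpace ℝ (Fin n)))
    [IsProbabilityMeasure μ] [IsProbabilityMeasure ν]
    (hμmom : ∫⁻ x, (‖x‖₊ : ℝ≥0∞) ∂μ < ⊤) (hνmom : ∫⁻ x, (‖x‖₊ : ℝ≥0∞) ∂ν < ⊤)
    (hac : μ ≪ volume)
    (π : Measure (EuclideanSpace ℝ (Fin n) × EuclideanSpace ℝ (Fin n)))
    [IsProbabilityMeasure π]
    (hπ1 : π.map Prod.fst = μ) (hπ2 : π.map Prod.snd = ν)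
    (Sig : Set (EuclideanSpace ℝ (Fin n) × EuclideanSpace ℝ (Fin n)))
    (hSigc : IsSigmaCompact Sig) (hSig : π Sig = 1) :
    ∃ R ⊆ Sig, IsSigmaCompact R ∧ π R = 1 ∧
      ∀ p ∈ R, ∀ r : ℝ, 0 < r →
        Tendsto
          (fun δ : ℝ =>
            volume ({x' | ∃ y', dist y' p.2 ≤ r ∧ (x', y') ∈ Sig} ∩ ball p.1 δ) /
              volume (ball p.1 δ))
          (nhdsWithin 0 (Set.Ioi 0)) (nhds 1) := by
  classical
  haveI : Nonempty (Fin n) := ⟨⟨0, hn⟩⟩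
  haveI : Nontrivial (EuclideanSpace ℝ (Fin n)) := inferInstance
  let E := EuclideanSpace ℝ (Fin n)
  let C : E → ℝ → Set E := fun y r => {x' | ∃ y', dist y' y ≤ r ∧ (x', y') ∈ Sig}
  let P : E → ℝ → E → Prop := fun y r x =>
    Tendsto (fun δ : ℝ => volume (C y r ∩ closedBall x δ) / volume (closedBall x δ))
      (𝓝[>] (0:ℝ)) (𝓝 1)
  have hbad : ∀ (y : E) (q : ℝ), volume ({x | ¬ P y q x} ∩ C y q) = 0 := by
    intro y q
    have h := Besicovitch.ae_tendsto_measure_inter_div volume (C y q)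
    exact Measure.measure_inter_eq_zero_of_restrict (ae_iff.1 h)
  let N : E → ℝ → Set E := fun y q => toMeasurable volume ({x | ¬ P y q x} ∩ C y q)
  have hNmeas : ∀ y q, MeasurableSet (N y q) := fun y q => measurableSet_toMeasurable _ _
  have hNnull : ∀ y q, volume (N y q) = 0 := fun y q => by
    simpa [N, measure_toMeasurable] using hbad y q
  have hNsub : ∀ y q, ({x | ¬ P y q x} ∩ C y q) ⊆ N y q := fun y q => subset_toMeasurable _ _
  obtain ⟨e, he⟩ : ∃ e : ℕ → E, DenseRange e :=
    ⟨TopologicalSpace.denseSeq E, TopologicalSpace.denseRange_denseSeq E⟩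
  let B : Set (E × E) := ⋃ (i : ℕ) (q : ℚ), (N (e i) q) ×ˢ (closedBall (e i) (q:ℝ))
  have hBmeas : MeasurableSet B := MeasurableSet.iUnion fun i => MeasurableSet.iUnion fun q =>
    (hNmeas _ _).prod measurableSet_closedBall
  have hterm : ∀ (i : ℕ) (q : ℚ), π ((N (e i) (q:ℝ)) ×ˢ (closedBall (e i) (q:ℝ))) = 0 := by
    intro i q
    refine le_antisymm ?_ zero_le
    calc π (N (e i) (q:ℝ) ×ˢ closedBall (e i) (q:ℝ))
        ≤ π (Prod.fst ⁻¹' (N (e i) (q:ℝ))) := measure_mono (fun p hp => hp.1)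
      _ = μ (N (e i) (q:ℝ)) := by
          rw [← hπ1, Measure.map_apply measurable_fst (hNmeas _ _)]
      _ = 0 := hac (hNnull _ _)
  have hBnull : π B = 0 := by
    refine le_antisymm ?_ zero_le
    refine le_trans (measure_iUnion_le _) ?_
    refine le_trans (ENNReal.tsum_le_tsum fun i => measure_iUnion_le _) ?_
    simp [hterm]
  let A : Set (E × E) := Sig \ B
  have hSigMeas : MeasurableSet Sig := by
    obtain ⟨K, hK, rfl⟩ := hSigc
    exact MeasurableSet.iUnion fun m => (hK m).isClosed.measurableSet
  have hAmeas : MeasurableSet A := hSigMeas.diff hBmeas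
  have hπA : π A = 1 := by rw [measure_diff_null hBnull, hSig]
  have key : ∀ p ∈ A, ∀ r : ℝ, 0 < r →
      Tendsto (fun δ : ℝ => volume (C p.2 r ∩ ball p.1 δ) / volume (ball p.1 δ))
        (𝓝[>] (0:ℝ)) (𝓝 1) := by
    rintro ⟨x, y⟩ ⟨hpS, hpB⟩ r hr
    obtain ⟨q, hq0, hq2⟩ : ∃ q : ℚ, (0:ℝ) < q ∧ (q:ℝ) < r / 2 := by
      obtain ⟨q, h1, h2⟩ := exists_rat_btwn (half_pos hr)
      exact ⟨q, h1, h2⟩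
    obtain ⟨i, hi⟩ : ∃ i, dist y (e i) < q := Metric.denseRange_iff.1 he y q hq0
    have hyb : y ∈ closedBall (e i) (q:ℝ) := mem_closedBall.2 hi.le
    have hxC : x ∈ C (e i) (q:ℝ) := ⟨y, hi.le, hpS⟩
    have hxN : x ∉ N (e i) (q:ℝ) := fun h =>
      hpB (mem_iUnion.2 ⟨i, mem_iUnion.2 ⟨q, ⟨h, hyb⟩⟩⟩)
    have hPx : P (e i) (q:ℝ) x := by
      by_contra h
      exact hxN (hNsub _ _ ⟨h, hxC⟩)
    have hsub : C (e i) (q:ℝ) ⊆ C y r := by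
      rintro x' ⟨y', hy', hx'⟩
      refine ⟨y', ?_, hx'⟩
      calc dist y' y ≤ dist y' (e i) + dist (e i) y := dist_triangle _ _ _
        _ ≤ q + q := add_le_add hy' (by rw [dist_comm]; exact hi.le)
        _ ≤ r := by linarith
    refine tendsto_of_tendsto_of_tendsto_of_le_of_le' hPx tendsto_const_nhds ?_ ?_
    · filter_upwards [self_mem_nhdsWithin] with δ (hδ : δ ∈ Set.Ioi (0:ℝ))
      have hcb : volume (closedBall x δ) = volume (ball x δ) :=
        Measure.addHaar_closedBall_eq_addHaar_ball (μ := (volume : Measure E)) x δ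
      have hnum : volume (C (e i) (q:ℝ) ∩ closedBall x δ) ≤ volume (C y r ∩ ball x δ) := by
        have hsub2 : C (e i) (q:ℝ) ∩ closedBall x δ ⊆ (C y r ∩ ball x δ) ∪ sphere x δ := by
          rintro z ⟨hz1, hz2⟩
          rcases lt_or_eq_of_le (mem_closedBall.1 hz2) with h | h
          · exact Or.inl ⟨hsub hz1, mem_ball.2 h⟩
          · exact Or.inr (mem_sphere.2 h)
        calc volume (C (e i) (q:ℝ) ∩ closedBall x δ)
            ≤ volume ((C y r ∩ ball x δ) ∪ sphere x δ) := measure_mono hsub2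
          _ ≤ volume (C y r ∩ ball x δ) + volume (sphere x δ) := measure_union_le _ _
          _ = volume (C y r ∩ ball x δ) := by rw [Measure.addHaar_sphere (μ := (volume : Measure E)), add_zero]
      calc volume (C (e i) (q:ℝ) ∩ closedBall x δ) / volume (closedBall x δ)
          = volume (C (e i) (q:ℝ) ∩ closedBall x δ) / volume (ball x δ) := by rw [hcb]
        _ ≤ volume (C y r ∩ ball x δ) / volume (ball x δ) := ENNReal.div_le_div_right hnum _
    · filter_upwards with δ
      exact le_trans (ENNReal.div_le_div_right (measure_mono inter_subset_right) _)
        ENNReal.div_self_le_one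
  have hlt : ∀ m : ℕ, (1 : ℝ≥0∞) - (m : ℝ≥0∞)⁻¹ < π A := by
    intro m
    rw [hπA]
    exact ENNReal.sub_lt_self ENNReal.one_ne_top one_ne_zero
      (ENNReal.inv_ne_zero.2 (ENNReal.natCast_ne_top m))
  choose K hKA hKc hKm using fun m : ℕ => hAmeas.exists_lt_isCompact (hlt m)
  refine ⟨⋃ m, K m, ?_, ⟨K, hKc, rfl⟩, ?_, ?_⟩
  · exact iUnion_subset fun m => (hKA m).trans diff_subset
  · refine le_antisymm prob_le_one ?_
    refine ENNReal.le_of_forall_pos_le_add fun ε hε _ => ?_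
    obtain ⟨m, hm⟩ := ENNReal.exists_inv_nat_lt
      (show ((ε:ℝ≥0∞)) ≠ 0 by exact_mod_cast hε.ne')
    calc (1:ℝ≥0∞) ≤ (1 - (m:ℝ≥0∞)⁻¹) + (m:ℝ≥0∞)⁻¹ := le_tsub_add
      _ ≤ π (K m) + ε := add_le_add (hKm m).le hm.le
      _ ≤ π (⋃ m, K m) + ε := add_le_add (measure_mono (subset_iUnion K m)) le_rfl
  · intro p hp r hr
    obtain ⟨m, hpm⟩ := mem_iUnion.1 hp
    exact key p (hKA m hpm) r hr
end
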